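/- Let n ≥ 1, let p : Fin n → ℝ be a probability vector with p i > 0 for all i, let L : Fin n → ℝ, let ε > 0 and κ > 0, and let g : ℝ → ℝ be convex. Then the function (λ, ρ) ↦ λ·ε + ρ + (λ+κ) · Σ_i p i * g((L i − ρ)/(λ+κ)) is convex on the set { (λ, ρ) : λ ≥ 0, ρ ∈ ℝ }. -/

import Mathlib

/-- Perspective inequality for a convex function. -/
lemma persp_ineq (g : ℝ → ℝ) (hg : ConvexOn ℝ Set.univ g)
    (t1 t2 : ℝ) (ht1 : 0 < t1) (ht2 : 0 < t2) (z1 z2 : ℝ)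
    (a b : ℝ) (ha : 0 ≤ a) (hb : 0 ≤ b) (hab : a + b = 1) :
    (a * t1 + b * t2) * g ((a * z1 + b * z2) / (a * t1 + b * t2)) ≤
      a * (t1 * g (z1 / t1)) + b * (t2 * g (z2 / t2)) := by
  have ht : 0 < a * t1 + b * t2 := by
    rcases ha.eq_or_lt with h | h
    · have hb1 : b = 1 := by linarith
      simp [← h, hb1, ht2]
    · have : 0 < a * t1 := mul_pos h ht1
      nlinarith [mul_nonneg hb ht2.le]
  set t := a * t1 + b * t2 with htdef
  have hw1 : 0 ≤ a * t1 / t := by positivity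
  have hw2 : 0 ≤ b * t2 / t := by positivity
  have hwsum : a * t1 / t + b * t2 / t = 1 := by field_simp; exact htdef.symm
  have key := hg.2 (Set.mem_univ (z1 / t1)) (Set.mem_univ (z2 / t2)) hw1 hw2 hwsum
  simp only [smul_eq_mul] at key
  have harg : a * t1 / t * (z1 / t1) + b * t2 / t * (z2 / t2) = (a * z1 + b * z2) / t := by
    field_simp
  rw [harg] at key
  have := mul_le_mul_of_nonneg_left key ht.le
  calc t * g ((a * z1 + b * z2) / t)
      ≤ t * (a * t1 / t * g (z1 / t1) + b * t2 / t * g (z2 / t2)) := this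
    _ = a * (t1 * g (z1 / t1)) + b * (t2 * g (z2 / t2)) := by
        field_simp

/-- Convexity of the f-divergence DRO dual objective in the pair `(λ, ρ)`
on the half-plane `{λ ≥ 0}`, for any convex integrand `g` (playing the role of `f*`). -/
theorem dual_objective_convex (n : ℕ) (hn : 1 ≤ n) (p : Fin n → ℝ)
    (hp_pos : ∀ i, 0 < p i) (hp_sum : ∑ i, p i = 1)
    (L : Fin n → ℝ) (ε κ : ℝ) (hε : 0 < ε) (hκ : 0 < κ)
    (g : ℝ → ℝ) (hg : ConvexOn ℝ Set.univ g) :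
    ConvexOn ℝ {x : ℝ × ℝ | 0 ≤ x.1}
      (fun x : ℝ × ℝ =>
        x.1 * ε + x.2 + (x.1 + κ) * ∑ i, p i * g ((L i - x.2) / (x.1 + κ))) := by
  constructor
  · intro x hx y hy a b ha hb hab
    exact add_nonneg (mul_nonneg ha hx) (mul_nonneg hb hy)
  · rintro ⟨x1, x2⟩ hx ⟨y1, y2⟩ hy a b ha hb hab
    simp only [Set.mem_setOf_eq] at hx hy
    simp only [Prod.smul_mk, Prod.mk_add_mk, smul_eq_mul]
    have ht1 : (0:ℝ) < x1 + κ := by linarith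
    have ht2 : (0:ℝ) < y1 + κ := by linarith
    have hteq : a * x1 + b * y1 + κ = a * (x1 + κ) + b * (y1 + κ) := by nlinarith
    have key : (a * x1 + b * y1 + κ) *
        ∑ i, p i * g ((L i - (a * x2 + b * y2)) / (a * x1 + b * y1 + κ)) ≤
        a * ((x1 + κ) * ∑ i, p i * g ((L i - x2) / (x1 + κ))) +
        b * ((y1 + κ) * ∑ i, p i * g ((L i - y2) / (y1 + κ))) := by
      rw [Finset.mul_sum, Finset.mul_sum, Finset.mul_sum, Finset.mul_sum, Finset.mul_sum,
        ← Finset.sum_add_distrib]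
      apply Finset.sum_le_sum
      intro i _
      have hzeq : L i - (a * x2 + b * y2) = a * (L i - x2) + b * (L i - y2) := by linear_combination (-(L i)) * hab
      have h := persp_ineq g hg (x1 + κ) (y1 + κ) ht1 ht2 (L i - x2) (L i - y2) a b ha hb hab
      rw [← hteq, ← hzeq] at h
      calc (a * x1 + b * y1 + κ) * (p i * g ((L i - (a * x2 + b * y2)) / (a * x1 + b * y1 + κ)))
          = p i * ((a * x1 + b * y1 + κ) * g ((L i - (a * x2 + b * y2)) / (a * x1 + b * y1 + κ))) := by ring
        _ ≤ p i * (a * ((x1 + κ) * g ((L i - x2) / (x1 + κ))) +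
              b * ((y1 + κ) * g ((L i - y2) / (y1 + κ)))) :=
              mul_le_mul_of_nonneg_left h (hp_pos i).le
        _ = a * ((x1 + κ) * (p i * g ((L i - x2) / (x1 + κ)))) +
              b * ((y1 + κ) * (p i * g ((L i - y2) / (y1 + κ)))) := by ring
    nlinarith [key]
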